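/- Let N and m be positive integers with 2m ≤ N, let A ∈ ℂ^{m×N} be the partial IDFT matrix, let Ω ⊆ {1,…,N} be a set of k indices, let x : Ω → ℂ, let ṽ ∈ ℂ^m, and set ỹ = Σ_{ω∈Ω} x_ω·a_ω + ṽ. If an index ω' ∈ {1,…,N} satisfies dist_N(ω', ω) ≥ N/(2m) for every ω ∈ Ω, where dist_N(p,q) = min(|p−q|, N−|p−q|) is the cyclic distance, then |⟨a_{ω'}, ỹ⟩| ≤ (k/(m·sin(π/(2m))))·max_{ω∈Ω}|x_ω| + ‖ṽ‖₂. -/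

import Mathlib

open Complex Real

/-- The ω-th column of the partial IDFT matrix `A ∈ ℂ^{m×N}` with entries
`A_{l,ω} = (1/√m)·exp(2πi(l−1)(ω−1)/N)` (here indexed from 0). -/
noncomputable def idftCol (N m : ℕ) (ω : Fin N) : EuclideanSpace ℂ (Fin m) :=
  WithLp.toLp 2 fun l => ((1 / Real.sqrt m : ℝ) : ℂ) *
    Complex.exp (2 * Real.pi * Complex.I * ((l : ℕ) : ℂ) * ((ω : ℕ) : ℂ) / (N : ℂ))

/-- The cyclic distance `dist_N(p,q) = min(|p−q|, N−|p−q|)` between two indices,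
as a real number. -/
noncomputable def cyclicDist (N : ℕ) (p q : Fin N) : ℝ :=
  min |((p : ℕ) : ℝ) - ((q : ℕ) : ℝ)| ((N : ℝ) - |((p : ℕ) : ℝ) - ((q : ℕ) : ℝ)|)

lemma sin_ge_aux {a x : ℝ} (ha0 : 0 ≤ a) (ha : a ≤ π/2) (h1 : a ≤ x) (h2 : x ≤ π - a) :
    Real.sin a ≤ Real.sin x := by
  rcases le_or_gt x (π/2) with h | h
  · exact Real.sin_le_sin_of_le_of_le_pi_div_two (by linarith) h h1
  · have := Real.sin_le_sin_of_le_of_le_pi_div_two (x := a) (y := π - x)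
      (by linarith) (by linarith) (by linarith)
    rwa [Real.sin_pi_sub] at this

lemma abs_exp_mul_I_sub_one (θ : ℝ) :
    ‖Complex.exp ((θ:ℂ) * Complex.I) - 1‖ = 2 * |Real.sin (θ/2)| := by
  have e1 : Complex.exp ((θ:ℂ)*Complex.I)
      = Complex.exp (((θ/2:ℝ):ℂ)*Complex.I) * Complex.exp (((θ/2:ℝ):ℂ)*Complex.I) := by
    rw [← Complex.exp_add]
    congr 1
    push_cast
    ring
  have h : Complex.exp ((θ:ℂ) * Complex.I) - 1
      = Complex.exp (((θ/2 : ℝ):ℂ) * Complex.I) * (2 * Complex.sin (((θ/2 : ℝ):ℂ)) * Complex.I) := by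
    rw [e1, Complex.exp_mul_I]
    linear_combination Complex.sin_sq_add_cos_sq (((θ/2:ℝ)):ℂ) -
      (Complex.sin (((θ/2:ℝ)):ℂ))^2 * Complex.I_sq
  rw [h, norm_mul, Complex.norm_exp_ofReal_mul_I, one_mul]
  simp only [norm_mul, Complex.norm_two, Complex.norm_I, mul_one]
  rw [← Complex.ofReal_sin, Complex.norm_real, Real.norm_eq_abs]

lemma norm_idftCol (N m : ℕ) (hm : 0 < m) (ω : Fin N) : ‖idftCol N m ω‖ = 1 := by
  have hexp : ∀ l : Fin m, ‖idftCol N m ω l‖ = 1 / Real.sqrt m := by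
    intro l
    have he : (2 * (Real.pi:ℂ) * Complex.I * ((l:ℕ):ℂ) * ((ω:ℕ):ℂ) / (N:ℂ))
        = ((2 * Real.pi * (l:ℕ) * (ω:ℕ) / N : ℝ) : ℂ) * Complex.I := by
      push_cast; ring
    rw [idftCol, PiLp.toLp_apply, norm_mul, he,
      Complex.norm_exp_ofReal_mul_I, mul_one, Complex.norm_real, Real.norm_eq_abs,
      _root_.abs_of_nonneg (by positivity)]
  rw [EuclideanSpace.norm_eq]
  have h2 : ∀ l : Fin m, ‖idftCol N m ω l‖ ^ 2 = 1 / m := by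
    intro l
    rw [hexp l, div_pow, one_pow, Real.sq_sqrt (Nat.cast_nonneg m)]
  rw [Finset.sum_congr rfl (fun l _ => h2 l), Finset.sum_const, Finset.card_univ,
    Fintype.card_fin, nsmul_eq_mul, mul_one_div, div_self (by positivity), Real.sqrt_one]

lemma inner_idftCol (N m : ℕ) (hm : 0 < m) (ω' ω : Fin N) :
    (inner ℂ (idftCol N m ω') (idftCol N m ω) : ℂ)
      = (1/(m:ℂ)) * ∑ l ∈ Finset.range m,
        (Complex.exp ((((2 * Real.pi * (((ω:ℕ):ℝ) - ((ω':ℕ):ℝ)) / N : ℝ)):ℂ) * Complex.I))^l := by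
  rw [PiLp.inner_apply]
  rw [Finset.mul_sum, ← Fin.sum_univ_eq_sum_range]
  congr 1
  funext l
  rw [RCLike.inner_apply', idftCol, idftCol, PiLp.toLp_apply, PiLp.toLp_apply]
  rw [map_mul, ← Complex.exp_conj]
  have hconj : (starRingEnd ℂ) (2 * (Real.pi:ℂ) * Complex.I * ((l:ℕ):ℂ) * ((ω':ℕ):ℂ) / (N:ℂ))
      = -(2 * (Real.pi:ℂ) * Complex.I * ((l:ℕ):ℂ) * ((ω':ℕ):ℂ) / (N:ℂ)) := by
    simp [map_div₀, map_mul, Complex.conj_I, Complex.conj_ofReal, map_ofNat]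
    ring
  rw [hconj]
  have hsq : ((1 / Real.sqrt m : ℝ):ℂ) * (((1 / Real.sqrt m : ℝ):ℂ)) = 1/(m:ℂ) := by
    have hr : (1/Real.sqrt m) * (1/Real.sqrt m) = 1/(m:ℝ) := by
      rw [div_mul_div_comm, one_mul, Real.mul_self_sqrt (Nat.cast_nonneg m)]
    rw [← Complex.ofReal_mul, hr]
    push_cast
    ring
  have harg : -(2 * (Real.pi:ℂ) * Complex.I * ((l:ℕ):ℂ) * ((ω':ℕ):ℂ) / (N:ℂ))
      + 2 * (Real.pi:ℂ) * Complex.I * ((l:ℕ):ℂ) * ((ω:ℕ):ℂ) / (N:ℂ)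
      = ((l:ℕ):ℂ) * ((((2 * Real.pi * (((ω:ℕ):ℝ) - ((ω':ℕ):ℝ)) / N : ℝ)):ℂ) * Complex.I) := by
    push_cast; ring
  calc (starRingEnd ℂ) (((1 / Real.sqrt m : ℝ):ℂ)) *
        Complex.exp (-(2 * (Real.pi:ℂ) * Complex.I * ((l:ℕ):ℂ) * ((ω':ℕ):ℂ) / (N:ℂ))) *
        (((1 / Real.sqrt m : ℝ):ℂ) * Complex.exp (2 * (Real.pi:ℂ) * Complex.I * ((l:ℕ):ℂ) * ((ω:ℕ):ℂ) / (N:ℂ)))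
      = (((1 / Real.sqrt m : ℝ):ℂ) * ((1 / Real.sqrt m : ℝ):ℂ)) *
        Complex.exp (-(2 * (Real.pi:ℂ) * Complex.I * ((l:ℕ):ℂ) * ((ω':ℕ):ℂ) / (N:ℂ))
          + 2 * (Real.pi:ℂ) * Complex.I * ((l:ℕ):ℂ) * ((ω:ℕ):ℂ) / (N:ℂ)) := by
        rw [Complex.conj_ofReal, Complex.exp_add]; ring
    _ = 1/(m:ℂ) * Complex.exp (((l:ℕ):ℂ) * ((((2 * Real.pi * (((ω:ℕ):ℝ) - ((ω':ℕ):ℝ)) / N : ℝ)):ℂ) * Complex.I)) := by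
        rw [hsq, harg]
    _ = _ := by rw [Complex.exp_nat_mul]

lemma key_bound (N m : ℕ) (hN : 0 < N) (hm : 0 < m) (h2m : 2*m ≤ N) (ω' ω : Fin N)
    (hfar : (N:ℝ)/(2*m) ≤ cyclicDist N ω' ω) :
    ‖(inner ℂ (idftCol N m ω') (idftCol N m ω) : ℂ)‖ ≤ 1/(m * Real.sin (π/(2*m))) := by
  have hNpos : (0:ℝ) < N := by positivity
  have hmpos : (0:ℝ) < m := by positivity
  set d : ℝ := ((ω:ℕ):ℝ) - ((ω':ℕ):ℝ) with hd
  set θ : ℝ := 2 * Real.pi * d / N with hθ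
  set e : ℝ := |d| with he
  have h1 : (N:ℝ)/(2*m) ≤ e := by
    have := hfar
    rw [cyclicDist] at this
    rw [he, hd, abs_sub_comm]
    exact le_trans this (min_le_left _ _)
  have h2 : (N:ℝ)/(2*m) ≤ (N:ℝ) - e := by
    have := hfar
    rw [cyclicDist] at this
    rw [he, hd, abs_sub_comm]
    exact le_trans this (min_le_right _ _)
  have hapos : (0:ℝ) < Real.pi/(2*m) := by positivity
  have hahalf : Real.pi/(2*m) ≤ Real.pi/2 := by
    have h1le : (1:ℝ) ≤ m := by exact_mod_cast hm
    gcongr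
    linarith
  have hsinpos : 0 < Real.sin (Real.pi/(2*m)) :=
    Real.sin_pos_of_pos_of_lt_pi hapos (by linarith [Real.pi_pos])
  -- sin bound on |sin (θ/2)|
  have habs : |Real.sin (θ/2)| = |Real.sin (Real.pi * e / N)| := by
    rcases abs_cases d with ⟨hcase, _⟩ | ⟨hcase, _⟩
    · rw [he, hcase, hθ]; ring_nf
    · rw [he, hcase, hθ]
      rw [show Real.pi * -d / N = -(2 * Real.pi * d / N / 2) by ring, Real.sin_neg, abs_neg]
  have hx1 : Real.pi/(2*m) ≤ Real.pi * e / N := by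
    have hNe : (N:ℝ) ≤ e * (2*m) := (div_le_iff₀ (by positivity)).mp h1
    rw [div_le_div_iff₀ (by positivity) hNpos]
    nlinarith [Real.pi_pos]
  have hx2 : Real.pi * e / N ≤ Real.pi - Real.pi/(2*m) := by
    have he2 : e ≤ (N:ℝ) - (N:ℝ)/(2*m) := by linarith
    have hb : Real.pi * e / N ≤ Real.pi * ((N:ℝ) - (N:ℝ)/(2*m)) / N := by
      gcongr
    have heq : Real.pi * ((N:ℝ) - (N:ℝ)/(2*m)) / N = Real.pi - Real.pi/(2*m) := by
      field_simp
    linarith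
  have hsinb : Real.sin (Real.pi/(2*m)) ≤ |Real.sin (θ/2)| := by
    rw [habs]
    have := sin_ge_aux hapos.le hahalf hx1 hx2
    calc Real.sin (Real.pi/(2*m)) ≤ Real.sin (Real.pi * e / N) := this
      _ ≤ |Real.sin (Real.pi * e / N)| := le_abs_self _
  set z : ℂ := Complex.exp ((θ:ℂ) * Complex.I) with hz
  have hznorm : ‖z‖ = 1 := by
    rw [hz]; exact Complex.norm_exp_ofReal_mul_I θ
  have hz1norm : 2 * Real.sin (Real.pi/(2*m)) ≤ ‖z - 1‖ := by
    rw [hz, abs_exp_mul_I_sub_one]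
    linarith
  have hzne : z ≠ 1 := by
    intro hcon
    rw [hcon, sub_self, norm_zero] at hz1norm
    linarith
  rw [inner_idftCol N m hm ω' ω]
  rw [show ((((2 * Real.pi * (((ω:ℕ):ℝ) - ((ω':ℕ):ℝ)) / N : ℝ)):ℂ) * Complex.I) = (θ:ℂ) * Complex.I by rw [hθ, hd]]
  rw [← hz, geom_sum_eq hzne, norm_mul]
  have h1m : ‖(1/(m:ℂ))‖ = 1/(m:ℝ) := by
    simp
  rw [h1m, norm_div]
  have hnum : ‖z^m - 1‖ ≤ 2 := by
    calc ‖z^m - 1‖ ≤ ‖z^m‖ + ‖(1:ℂ)‖ := norm_sub_le _ _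
      _ = 2 := by rw [norm_pow, hznorm, one_pow, norm_one]; norm_num
  have hfrac : ‖z^m - 1‖ / ‖z - 1‖ ≤ 2 / (2 * Real.sin (Real.pi/(2*m))) :=
    div_le_div₀ (by norm_num) hnum (by linarith) hz1norm
  calc (1/(m:ℝ)) * (‖z^m - 1‖ / ‖z - 1‖)
      ≤ (1/(m:ℝ)) * (2 / (2 * Real.sin (Real.pi/(2*m)))) := by
        apply mul_le_mul_of_nonneg_left hfrac (by positivity)
    _ = 1/(m * Real.sin (Real.pi/(2*m))) := by
        field_simp

/-- let `2m ≤ N`, `Ω` a set of `k` indices, `ỹ = Σ_{ω∈Ω} x_ω a_ω + ṽ`.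
If an index `ω'` satisfies `dist_N(ω', ω) ≥ N/(2m)` for every `ω ∈ Ω`, then
`|⟨a_{ω'}, ỹ⟩| ≤ (k/(m·sin(π/(2m))))·max_{ω∈Ω}|x_ω| + ‖ṽ‖₂`. -/
theorem correlation_off_support_bound (N m k : ℕ) (hN : 0 < N) (hm : 0 < m)
    (h2m : 2 * m ≤ N)
    (Ω : Finset (Fin N)) (hΩ : Ω.Nonempty) (hk : Ω.card = k)
    (x : Fin N → ℂ) (v y : EuclideanSpace ℂ (Fin m))
    (hy : y = (∑ ω ∈ Ω, x ω • idftCol N m ω) + v)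
    (ω' : Fin N) (hfar : ∀ ω ∈ Ω, (N : ℝ) / (2 * m) ≤ cyclicDist N ω' ω) :
    ‖(inner ℂ (idftCol N m ω') y : ℂ)‖ ≤
      ((k : ℝ) / (m * Real.sin (Real.pi / (2 * m)))) * (Ω.sup' hΩ fun ω => ‖x ω‖) + ‖v‖ := by
  set M : ℝ := Ω.sup' hΩ fun ω => ‖x ω‖ with hM
  set C : ℝ := 1 / (m * Real.sin (Real.pi / (2 * m))) with hC
  have hsinpos : 0 < Real.sin (Real.pi/(2*m)) := by
    apply Real.sin_pos_of_pos_of_lt_pi (by positivity)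
    have h1le : (1:ℝ) ≤ m := by exact_mod_cast hm
    have : Real.pi/(2*m) ≤ Real.pi/2 := by gcongr; linarith
    linarith [Real.pi_pos]
  have hCpos : 0 < C := by rw [hC]; positivity
  have hMnonneg : 0 ≤ M := by
    obtain ⟨ω₀, hω₀⟩ := hΩ
    exact le_trans (norm_nonneg (x ω₀)) (Finset.le_sup' (fun ω => ‖x ω‖) hω₀)
  have hsplit : (inner ℂ (idftCol N m ω') y : ℂ)
      = (∑ ω ∈ Ω, x ω * (inner ℂ (idftCol N m ω') (idftCol N m ω) : ℂ))
        + (inner ℂ (idftCol N m ω') v : ℂ) := by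
    rw [hy, inner_add_right, inner_sum]
    congr 1
    exact Finset.sum_congr rfl fun ω _ => inner_smul_right _ _ _
  calc ‖(inner ℂ (idftCol N m ω') y : ℂ)‖
      ≤ ‖∑ ω ∈ Ω, x ω * (inner ℂ (idftCol N m ω') (idftCol N m ω) : ℂ)‖
        + ‖(inner ℂ (idftCol N m ω') v : ℂ)‖ := by rw [hsplit]; exact norm_add_le _ _
    _ ≤ (∑ ω ∈ Ω, ‖x ω * (inner ℂ (idftCol N m ω') (idftCol N m ω) : ℂ)‖) + ‖v‖ := by
        gcongr
        · exact norm_sum_le _ _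
        · calc ‖(inner ℂ (idftCol N m ω') v : ℂ)‖ ≤ ‖idftCol N m ω'‖ * ‖v‖ :=
              norm_inner_le_norm _ _
            _ = ‖v‖ := by rw [norm_idftCol N m hm ω', one_mul]
    _ ≤ (∑ _ω ∈ Ω, M * C) + ‖v‖ := by
        gcongr with ω hω
        rw [norm_mul]
        apply mul_le_mul (Finset.le_sup' (fun ω => ‖x ω‖) hω)
          (key_bound N m hN hm h2m ω' ω (hfar ω hω)) (norm_nonneg _) hMnonneg
    _ = (k : ℝ) * (M * C) + ‖v‖ := by rw [Finset.sum_const, hk, nsmul_eq_mul]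
    _ = ((k : ℝ) / (m * Real.sin (Real.pi / (2 * m)))) * M + ‖v‖ := by
        rw [hC]; ring
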